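/- If G is a finite group with a normal series 1 = G_0 ◁ G_1 ◁ ... ◁ G_k = G in which every factor G_{i+1}/G_i is either solvable or a direct product of non-abelian simple groups, and if G is anabelian with exactly j non-solvable factors among the G_{i+1}/G_i, then G admits a normal subgroup H such that G/H is a direct product of non-abelian finite simple groups and H has such a series with at most j−1 non-solvable factors (assuming j ≥ 1 and G non-trivial). -/

import Mathlib

/-- A subgroup `H ≤ G` is subnormal if there is a chain `H = H₀ ⊴ H₁ ⊴ ⋯ ⊴ Hₖ = G`. -/
def IsSubnormal {G : Type*} [Group G] (H : Subgroup G) : Prop :=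
  ∃ (n : ℕ) (c : Fin (n + 1) → Subgroup G), c 0 = H ∧ c (Fin.last n) = ⊤ ∧
    ∀ i : Fin n, c i.castSucc ≤ c i.succ ∧
      ((c i.castSucc).subgroupOf (c i.succ)).Normal

/-- A group is anabelian if all of its composition factors are non-abelian:
every simple quotient of a subnormal subgroup is non-abelian. -/
def IsAnabelian (G : Type*) [Group G] : Prop :=
  ∀ (H : Subgroup G) (N : Subgroup H) (hN : N.Normal), IsSubnormal H →
    letI := hN
    IsSimpleGroup (H ⧸ N) → ¬ (∀ a b : H ⧸ N, a * b = b * a)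

/-- `Q` is (isomorphic to) a direct product of non-abelian simple groups. -/
def IsProdOfNonabelianSimples (Q : Type*) [Group Q] : Prop :=
  ∃ (ι : Type) (S : ι → Type) (hS : ∀ i, Group (S i)),
    letI := hS
    (∀ i, IsSimpleGroup (S i)) ∧ (∀ i, ¬ ∀ a b : S i, a * b = b * a) ∧
      Nonempty (Q ≃* ∀ i, S i)

/-- The layer `B/A` is solvable or a direct product of non-abelian simple groups. -/
def SolvableOrProdLayer {G : Type*} [Group G] (A B : Subgroup G)
    (h : A.Normal) : Prop :=
  letI : (A.subgroupOf B).Normal := h.subgroupOf B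
  IsSolvable (B ⧸ A.subgroupOf B) ∨ IsProdOfNonabelianSimples (B ⧸ A.subgroupOf B)

/-- The layer `B/A` is not solvable. -/
def NonsolvableLayer {G : Type*} [Group G] (A B : Subgroup G)
    (h : A.Normal) : Prop :=
  letI : (A.subgroupOf B).Normal := h.subgroupOf B
  ¬ IsSolvable (B ⧸ A.subgroupOf B)

/-- `G` has a normal series whose layers are each solvable or a direct product
of non-abelian simple groups, with at most `j` non-solvable layers. -/
def HasLayeredSeries (G : Type*) [Group G] (j : ℕ) : Prop :=
  ∃ (k : ℕ) (c : Fin (k + 1) → Subgroup G) (hnorm : ∀ i, (c i).Normal),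
    c 0 = ⊥ ∧ c (Fin.last k) = ⊤ ∧ (∀ i : Fin k, c i.castSucc ≤ c i.succ) ∧
    (∀ i : Fin k, SolvableOrProdLayer (c i.castSucc) (c i.succ) (hnorm _)) ∧
    Nat.card {i : Fin k //
      NonsolvableLayer (c i.castSucc) (c i.succ) (hnorm _)} ≤ j

section Aux

lemma aux_exists_simple_quotient (Q : Type*) [Group Q] [Finite Q] [Nontrivial Q] :
    ∃ (N : Subgroup Q), ∃ (_ : N.Normal), IsSimpleGroup (Q ⧸ N) := by
  classical
  have hfin : (Set.univ : Set (Subgroup Q)).Finite := Set.finite_univ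
  set s : Set (Subgroup Q) := {M | M.Normal ∧ M ≠ ⊤} with hs
  have hsfin : s.Finite := Set.Finite.subset hfin (by simp)
  have hne : s.Nonempty := ⟨⊥, ⟨inferInstance, bot_ne_top⟩⟩
  obtain ⟨M, hMs, hmax⟩ := Set.Finite.exists_maximalFor id s hsfin hne
  haveI hMn : M.Normal := hMs.1
  refine ⟨M, hMn, ?_⟩
  have hnt : Nontrivial (Q ⧸ M) := by
    obtain ⟨x, hx⟩ := (Subgroup.eq_top_iff' M).not.mp hMs.2 |> not_forall.mp
    exact ⟨QuotientGroup.mk x, 1, by simpa [QuotientGroup.eq_one_iff] using hx⟩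
  haveI := hnt
  constructor
  intro N hN
  set P := N.comap (QuotientGroup.mk' M) with hP
  haveI hPn : P.Normal := hN.comap _
  have hMP : M ≤ P := by
    intro x hx
    simp only [hP, Subgroup.mem_comap]
    have : QuotientGroup.mk' M x = 1 := by
      simpa [QuotientGroup.eq_one_iff] using hx
    rw [this]; exact N.one_mem
  have hmap : N = P.map (QuotientGroup.mk' M) :=
    (Subgroup.map_comap_eq_self_of_surjective (QuotientGroup.mk'_surjective M) N).symm
  by_cases hPt : P = ⊤
  · right
    rw [hmap, hPt]
    simpa using Subgroup.map_top_of_surjective _ (QuotientGroup.mk'_surjective M)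
  · left
    have : M = P := le_antisymm hMP (hmax ⟨hPn, hPt⟩ hMP)
    rw [hmap, ← this]
    ext y
    simp only [Subgroup.mem_map, Subgroup.mem_bot]
    constructor
    · rintro ⟨x, hx, rfl⟩
      simpa [QuotientGroup.eq_one_iff] using hx
    · rintro rfl
      exact ⟨1, M.one_mem, map_one _⟩

lemma aux_normal_isSubnormal {G : Type*} [Group G] {B : Subgroup G} (hB : B.Normal) :
    IsSubnormal B := by
  refine ⟨1, ![B, ⊤], rfl, rfl, fun i => ?_⟩
  have : i = 0 := Subsingleton.elim _ _
  subst this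
  exact ⟨le_top, hB.subgroupOf _⟩

lemma aux_solvable_layer_eq {G : Type*} [Group G] [Finite G] (hG : IsAnabelian G)
    {A B : Subgroup G} (hA : A.Normal) (hB : B.Normal) (hAB : A ≤ B)
    (hs : IsSolvable (↥B ⧸ A.subgroupOf B)) : A = B := by
  classical
  by_contra hne
  haveI : (A.subgroupOf B).Normal := hA.subgroupOf B
  haveI : Group.IsSolvable (↥B ⧸ A.subgroupOf B) := hs
  have hnt : Nontrivial (↥B ⧸ A.subgroupOf B) := by
    obtain ⟨x, hxB, hxA⟩ : ∃ x, x ∈ B ∧ x ∉ A := by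
      by_contra h
      push_neg at h
      exact hne (le_antisymm hAB h)
    refine ⟨QuotientGroup.mk ⟨x, hxB⟩, 1, ?_⟩
    simpa [QuotientGroup.eq_one_iff, Subgroup.mem_subgroupOf] using hxA
  obtain ⟨N, hNn, hNs⟩ := aux_exists_simple_quotient (↥B ⧸ A.subgroupOf B)
  haveI := hNn
  haveI := hNs
  set f : ↥B →* (↥B ⧸ A.subgroupOf B) ⧸ N :=
    (QuotientGroup.mk' N).comp (QuotientGroup.mk' (A.subgroupOf B)) with hf
  have hfs : Function.Surjective f :=
    (QuotientGroup.mk'_surjective N).comp (QuotientGroup.mk'_surjective (A.subgroupOf B))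
  haveI : f.ker.Normal := f.normal_ker
  have e : (↥B ⧸ f.ker) ≃* ((↥B ⧸ A.subgroupOf B) ⧸ N) :=
    QuotientGroup.quotientKerEquivOfSurjective f hfs
  haveI : Nontrivial ((↥B ⧸ A.subgroupOf B) ⧸ N) := hNs.toNontrivial
  haveI : Nontrivial (↥B ⧸ f.ker) := e.toEquiv.nontrivial
  haveI : IsSimpleGroup (↥B ⧸ f.ker) :=
    IsSimpleGroup.isSimpleGroup_of_surjective (f := e.symm.toMonoidHom) e.symm.surjective
  haveI : Group.IsSolvable ((↥B ⧸ A.subgroupOf B) ⧸ N) := by infer_instance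
  have hcomm : ∀ a b : (↥B ⧸ f.ker), a * b = b * a := by
    have h2 : ∀ a b : ((↥B ⧸ A.subgroupOf B) ⧸ N), a * b = b * a :=
      IsSimpleGroup.comm_iff_isSolvable.mpr inferInstance
    intro a b
    have := h2 (e a) (e b)
    rw [← map_mul, ← map_mul] at this
    exact e.injective this
  exact hG B f.ker inferInstance (aux_normal_isSubnormal hB) inferInstance hcomm

lemma aux_prod_of_mulEquiv {Q R : Type*} [Group Q] [Group R] (e : Q ≃* R)
    (h : IsProdOfNonabelianSimples Q) : IsProdOfNonabelianSimples R := by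
  obtain ⟨ι, S, hS, h1, h2, ⟨f⟩⟩ := h
  exact ⟨ι, S, hS, h1, h2, ⟨e.symm.trans f⟩⟩

/-- iso between nested-subgroupOf layer and original layer -/
noncomputable def aux_layer_equiv {G : Type*} [Group G] {A B H : Subgroup G}
    (hA : A.Normal) (hBH : B ≤ H) :
    letI : (A.subgroupOf B).Normal := hA.subgroupOf B
    letI : ((A.subgroupOf H).subgroupOf (B.subgroupOf H)).Normal :=
      (hA.subgroupOf H).subgroupOf (B.subgroupOf H)
    (↥(B.subgroupOf H) ⧸ (A.subgroupOf H).subgroupOf (B.subgroupOf H)) ≃*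
      (↥B ⧸ A.subgroupOf B) := by
  letI : (A.subgroupOf B).Normal := hA.subgroupOf B
  letI : ((A.subgroupOf H).subgroupOf (B.subgroupOf H)).Normal :=
    (hA.subgroupOf H).subgroupOf (B.subgroupOf H)
  refine QuotientGroup.congr _ _ (Subgroup.subgroupOfEquivOfLe hBH) ?_
  ext x
  simp only [Subgroup.mem_map, Subgroup.mem_subgroupOf, Subgroup.subgroupOfEquivOfLe,
    MulEquiv.coe_mk, Equiv.coe_fn_mk, MonoidHom.coe_coe]
  constructor
  · rintro ⟨y, hy, rfl⟩
    exact hy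
  · intro hx
    exact ⟨⟨⟨(x : G), hBH x.2⟩, x.2⟩, hx, rfl⟩

/-- iso between `G/H` and the top layer when `B = ⊤` -/
noncomputable def aux_top_equiv {G : Type*} [Group G] {H B : Subgroup G}
    (hH : H.Normal) (hB : B = ⊤) :
    letI : (H.subgroupOf B).Normal := hH.subgroupOf B
    (↥B ⧸ H.subgroupOf B) ≃* (G ⧸ H) := by
  letI : (H.subgroupOf B).Normal := hH.subgroupOf B
  refine QuotientGroup.congr _ _ ((MulEquiv.subgroupCongr hB).trans Subgroup.topEquiv) ?_
  ext x
  simp only [Subgroup.mem_map, Subgroup.mem_subgroupOf]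
  constructor
  · rintro ⟨y, hy, rfl⟩
    exact hy
  · intro hx
    exact ⟨⟨x, hB ▸ Subgroup.mem_top x⟩, hx, rfl⟩

end Aux

/-- Inductive step: a finite anabelian group with a layered normal series with
exactly `j ≥ 1` non-solvable layers has a normal subgroup `H` with `G/H` a
direct product of non-abelian finite simple groups and `H` admitting a layered
series with at most `j - 1` non-solvable layers. -/
theorem layered_series_inductive_step {G : Type*} [Group G] [Finite G]
    [Nontrivial G] (hG : IsAnabelian G) (k j : ℕ)
    (c : Fin (k + 1) → Subgroup G) (hnorm : ∀ i, (c i).Normal)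
    (h0 : c 0 = ⊥) (htop : c (Fin.last k) = ⊤)
    (hmono : ∀ i : Fin k, c i.castSucc ≤ c i.succ)
    (hfac : ∀ i : Fin k, SolvableOrProdLayer (c i.castSucc) (c i.succ) (hnorm _))
    (hj : Nat.card {i : Fin k //
      NonsolvableLayer (c i.castSucc) (c i.succ) (hnorm _)} = j)
    (hj1 : 1 ≤ j) :
    ∃ (H : Subgroup G) (hH : H.Normal),
      (letI := hH; IsProdOfNonabelianSimples (G ⧸ H)) ∧
      HasLayeredSeries H (j - 1) := by
  classical
  set P : Fin k → Prop :=
    fun i => NonsolvableLayer (c i.castSucc) (c i.succ) (hnorm _) with hPdef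
  -- pick a maximal non-solvable index m
  have hneS : Nonempty (Subtype P) := by
    have : 0 < Nat.card (Subtype P) := by omega
    exact (Nat.card_pos_iff.mp this).1
  set T : Set (Fin k) := {i | P i} with hT
  have hTne : T.Nonempty := ⟨hneS.some.1, hneS.some.2⟩
  obtain ⟨m, hmT, hmax⟩ := Set.Finite.exists_maximalFor id T (Set.toFinite T) hTne
  have hmub : ∀ a ∈ T, a ≤ m := by
    intro a ha
    by_contra h
    have hlt : m < a := lt_of_not_ge h
    exact absurd (hmax ha hlt.le) (not_le.mpr hlt)
  -- layers above m are trivial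
  have eqs : ∀ i : Fin k, m < i → c i.castSucc = c i.succ := by
    intro i hi
    have hiT : i ∉ T := fun hmem => (not_le.mpr hi) (hmax hmem hi.le)
    have hsolv : IsSolvable (↥(c i.succ) ⧸ (c i.castSucc).subgroupOf (c i.succ)) :=
      not_not.mp hiT
    exact aux_solvable_layer_eq hG (hnorm _) (hnorm _) (hmono i) hsolv
  -- hence c m.succ = ⊤
  have key : ∀ n : ℕ, ∀ hn : n ≤ k, m.val + 1 ≤ n →
      c ⟨n, Nat.lt_succ_of_le hn⟩ = c m.succ := by
    intro n
    induction n with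
    | zero => intro _ h; omega
    | succ n ih =>
      intro hn h
      rcases Nat.lt_or_ge n (m.val + 1) with h' | h'
      · have hnm : n = m.val := by omega
        subst hnm
        exact congrArg c (Fin.ext rfl)
      · have hi : n < k := by omega
        have hlt : m < (⟨n, hi⟩ : Fin k) := by
          rw [Fin.lt_def]; exact h'
        have e1 : c (⟨n, hi⟩ : Fin k).castSucc = c (⟨n, hi⟩ : Fin k).succ := eqs _ hlt
        have e2 : (⟨n + 1, Nat.lt_succ_of_le hn⟩ : Fin (k + 1)) = (⟨n, hi⟩ : Fin k).succ :=
          Fin.ext rfl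
        have e3 : ((⟨n, hi⟩ : Fin k).castSucc) =
            (⟨n, Nat.lt_succ_of_le (by omega)⟩ : Fin (k + 1)) := Fin.ext rfl
        rw [e2, ← e1, e3]
        exact ih (by omega) h'
  have hmk : m.val < k := m.isLt
  have htop' : c m.succ = ⊤ := by
    have := key k le_rfl (by omega)
    have hlast : (⟨k, Nat.lt_succ_of_le le_rfl⟩ : Fin (k + 1)) = Fin.last k := Fin.ext rfl
    rw [hlast, htop] at this
    exact this.symm
  -- the subgroup H
  refine ⟨c m.castSucc, hnorm _, ?_, ?_⟩
  · -- G ⧸ H is a product of non-abelian simples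
    have hmP : P m := hmT
    have hprod : IsProdOfNonabelianSimples
        (↥(c m.succ) ⧸ (c m.castSucc).subgroupOf (c m.succ)) := by
      have := hfac m
      unfold SolvableOrProdLayer at this
      exact this.resolve_left hmP
    exact aux_prod_of_mulEquiv (aux_top_equiv (hnorm m.castSucc) htop') hprod
  · -- layered series for H with at most j - 1 non-solvable layers
    set H := c m.castSucc with hHdef
    have cmono : Monotone c := Fin.monotone_iff_le_succ.mpr hmono
    have hle : m.val + 1 ≤ k + 1 := by omega
    set d : Fin (m.val + 1) → Subgroup ↥H :=
      fun i => (c (Fin.castLE hle i)).subgroupOf H with hddef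
    have hd : ∀ i, (d i).Normal := fun i => (hnorm _).subgroupOf H
    refine ⟨m.val, d, hd, ?_, ?_, ?_, ?_, ?_⟩
    · have e0 : Fin.castLE hle (0 : Fin (m.val + 1)) = (0 : Fin (k + 1)) := Fin.ext rfl
      show (c (Fin.castLE hle 0)).subgroupOf H = ⊥
      rw [e0, h0, Subgroup.bot_subgroupOf]
    · have eL : Fin.castLE hle (Fin.last m.val) = m.castSucc := Fin.ext rfl
      show (c (Fin.castLE hle (Fin.last m.val))).subgroupOf H = ⊤
      rw [eL, ← hHdef, Subgroup.subgroupOf_self]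
    · intro i
      have hi' : i.val < k := by omega
      have e1 : Fin.castLE hle i.castSucc = (⟨i.val, hi'⟩ : Fin k).castSucc := Fin.ext rfl
      have e2 : Fin.castLE hle i.succ = (⟨i.val, hi'⟩ : Fin k).succ := Fin.ext rfl
      show (c (Fin.castLE hle i.castSucc)).subgroupOf H ≤
        (c (Fin.castLE hle i.succ)).subgroupOf H
      rw [e1, e2]
      exact Subgroup.comap_mono (hmono ⟨i.val, hi'⟩)
    · intro i
      have hi' : i.val < k := by omega
      set i' : Fin k := ⟨i.val, hi'⟩ with hi'def
      have e1 : Fin.castLE hle i.castSucc = i'.castSucc := Fin.ext rfl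
      have e2 : Fin.castLE hle i.succ = i'.succ := Fin.ext rfl
      have hBH : c i'.succ ≤ H := by
        rw [hHdef]
        apply cmono
        rw [Fin.le_def]
        simp only [Fin.val_succ, Fin.coe_castSucc]
        show i.val + 1 ≤ m.val
        omega
      have E := aux_layer_equiv (A := c i'.castSucc) (B := c i'.succ) (H := H)
        (hnorm _) hBH
      have hfi := hfac i'
      unfold SolvableOrProdLayer at hfi ⊢
      rcases hfi with hfi | hfi
      · left
        haveI : Group.IsSolvable (↥(c i'.succ) ⧸ (c i'.castSucc).subgroupOf (c i'.succ)) := hfi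
        exact solvable_of_surjective (G := ↥(c i'.succ) ⧸ (c i'.castSucc).subgroupOf (c i'.succ))
          (f := E.symm.toMonoidHom) E.symm.surjective
      · right
        exact aux_prod_of_mulEquiv E.symm hfi
    · -- counting
      set P' : Fin m.val → Prop :=
        fun i => NonsolvableLayer (d i.castSucc) (d i.succ) (hd _) with hP'def
      have himp : ∀ i : Fin m.val, P' i → P ⟨i.val, by omega⟩ := by
        intro i hPi
        have hi' : i.val < k := by omega
        set i' : Fin k := ⟨i.val, hi'⟩ with hi'def
        have e1 : Fin.castLE hle i.castSucc = i'.castSucc := Fin.ext rfl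
        have e2 : Fin.castLE hle i.succ = i'.succ := Fin.ext rfl
        have hBH : c i'.succ ≤ H := by
          rw [hHdef]
          apply cmono
          rw [Fin.le_def]
          simp only [Fin.val_succ, Fin.coe_castSucc]
          show i.val + 1 ≤ m.val
          omega
        have E := aux_layer_equiv (A := c i'.castSucc) (B := c i'.succ) (H := H)
          (hnorm _) hBH
        intro hsolv
        apply hPi
        haveI : Group.IsSolvable (↥(c i'.succ) ⧸ (c i'.castSucc).subgroupOf (c i'.succ)) := hsolv
        show IsSolvable (↥((c i'.succ).subgroupOf H) ⧸
          ((c i'.castSucc).subgroupOf H).subgroupOf ((c i'.succ).subgroupOf H))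
        exact solvable_of_surjective (f := E.symm.toMonoidHom) E.symm.surjective
      -- transfer cardinals to finsets
      have hcard1 : Nat.card {i : Fin m.val // P' i} =
          (Finset.univ.filter P').card := by
        rw [Nat.card_eq_fintype_card, Fintype.card_subtype]
      have hcard2 : (Finset.univ.filter P).card = j := by
        rw [← hj, Nat.card_eq_fintype_card, Fintype.card_subtype]
      rw [hcard1]
      have hsub : ∀ i ∈ Finset.univ.filter P', (⟨i.val, by omega⟩ : Fin k) ∈
          (Finset.univ.filter P).erase m := by
        intro i hi
        rw [Finset.mem_filter] at hi
        rw [Finset.mem_erase, Finset.mem_filter]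
        refine ⟨?_, Finset.mem_univ _, himp i hi.2⟩
        intro h
        have : i.val = m.val := by
          have := congrArg Fin.val h
          simpa using this
        omega
      have hinj : Set.InjOn (fun i : Fin m.val => (⟨i.val, by omega⟩ : Fin k))
          (Finset.univ.filter P') := by
        intro a _ b _ hab
        have : a.val = b.val := by
          have := congrArg Fin.val hab
          simpa using this
        exact Fin.ext this
      have hle1 : (Finset.univ.filter P').card ≤
          ((Finset.univ.filter P).erase m).card :=
        Finset.card_le_card_of_injOn _ hsub hinj
      have hmem : m ∈ Finset.univ.filter P := by
        rw [Finset.mem_filter]; exact ⟨Finset.mem_univ _, hmT⟩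
      have := Finset.card_erase_of_mem hmem
      omega
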